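/- Let G and H be non-trivial groups, let H act faithfully on a set X, and suppose H is invariably generated. Let {y_i : i ∈ I} ⊆ X satisfy X = ⋃_{i∈I} y_iH, and suppose there exist elements t_i ∈ H (i ∈ I) such that the ⟨t_i⟩-orbit y_i⟨t_i⟩ is infinite for every i ∈ I. For each i let 𝒢_i be a generating set of the coordinate subgroup G_{y_i}, and let S_H be a subset of H that invariably generates H. Then the set S_H ∪ ⋃_{i∈I}(𝒢_i ∪ 𝒢_i·t_i ∪ {t_i}) invariably generates G ≀_X H. -/

import Mathlib

open Function SemidirectProduct

/-- A subset `S` invariably generates `K` if replacing each element of `S` by an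
arbitrary conjugate always yields a generating set of `K`. -/
def InvariablyGenerates (K : Type*) [Group K] (S : Set K) : Prop :=
  ∀ a : K → K, Subgroup.closure ((fun s => (a s)⁻¹ * s * a s) '' S) = ⊤

/-- `K` is invariably generated if `K` invariably generates itself. -/
def IsIG (K : Type*) [Group K] : Prop :=
  InvariablyGenerates K Set.univ

/-- `K` is finitely invariably generated if some finite subset invariably generates it. -/
def IsFIG (K : Type*) [Group K] : Prop :=
  ∃ S : Set K, S.Finite ∧ InvariablyGenerates K S

/-- The base of the wreath product `G ≀_X H`: the restricted direct product
`⨁_{x ∈ X} G`, realized as the finitely supported functions `X → G`. -/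
def WreathBase (G X : Type*) [Group G] : Subgroup (X → G) where
  carrier := {f | (mulSupport f).Finite}
  one_mem' := by simp
  mul_mem' {f g} hf hg := (Set.Finite.union hf hg).subset (mulSupport_mul f g)
  inv_mem' {f} hf := by simpa using hf

lemma mem_wreathBase {G X : Type*} [Group G] {f : X → G} :
    f ∈ WreathBase G X ↔ (mulSupport f).Finite := Iff.rfl

/-- The permutation action of `H` on the base, `(h • f) x = f (h⁻¹ • x)`, so that in the
wreath product conjugation by `h` (i.e. `h · g^{(x)} · h⁻¹`) sends the coordinate subgroup
`G_x` to `G_{h • x}`; equivalently `h⁻¹ · g^{(x)} · h = g^{(h⁻¹ • x)}`, which is the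
left-action rendering of "conjugation multiplies indices on the right". -/
def wreathAut (G H X : Type*) [Group G] [Group H] [MulAction H X] :
    H →* MulAut (WreathBase G X) where
  toFun h :=
    { toFun := fun f => ⟨fun x => (f : X → G) (h⁻¹ • x),
        mem_wreathBase.mpr (((mem_wreathBase.mp f.2).image (h • ·)).subset
          fun x hx => ⟨h⁻¹ • x, hx, by simp⟩)⟩
      invFun := fun f => ⟨fun x => (f : X → G) (h • x),
        mem_wreathBase.mpr (((mem_wreathBase.mp f.2).image (h⁻¹ • ·)).subset
          fun x hx => ⟨h • x, hx, by simp⟩)⟩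
      left_inv := fun f => Subtype.ext (funext fun x => by simp)
      right_inv := fun f => Subtype.ext (funext fun x => by simp)
      map_mul' := fun f g => Subtype.ext (funext fun x => by simp) }
  map_one' := by
    ext f x
    simp
  map_mul' h₁ h₂ := by
    ext f x
    simp [mul_smul]

/-- The restricted wreath product `G ≀_X H`. -/
abbrev WreathProduct (G H X : Type*) [Group G] [Group H] [MulAction H X] :=
  WreathBase G X ⋊[wreathAut G H X] H

open scoped Classical in
/-- `g^{(y)}`: the element of the base which is `g` in coordinate `y` and trivial elsewhere. -/
noncomputable def WreathBase.single {G : Type*} (X : Type*) [Group G] (y : X) :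
    G →* WreathBase G X where
  toFun g := ⟨fun x => if x = y then g else 1,
    mem_wreathBase.mpr ((Set.finite_singleton y).subset fun x hx => by
      by_contra hxy
      exact hx (if_neg hxy))⟩
  map_one' := Subtype.ext (funext fun x => by simp)
  map_mul' g₁ g₂ := Subtype.ext (funext fun x => by by_cases h : x = y <;> simp [h])

/-- The embedding of `G` onto the coordinate subgroup `G_y` of the wreath product. -/
noncomputable def coordHom (G H : Type*) {X : Type*} [Group G] [Group H] [MulAction H X]
    (y : X) : G →* WreathProduct G H X :=
  SemidirectProduct.inl.comp (WreathBase.single X y)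

/-- `H_X` is of torsion-type if there is `y ∈ X` such that for every `x` in the `H`-orbit
of `y` and every `k ∈ H`, the `⟨k⟩`-orbit of `x` is finite. -/
def IsTorsionType (H X : Type*) [Group H] [MulAction H X] : Prop :=
  ∃ y : X, ∀ x ∈ MulAction.orbit H y, ∀ k : H, (Set.range fun n : ℤ => k ^ n • x).Finite

/-- A `Γ_z`-set: a set of base elements containing, for every `g ∈ G`, an element whose
coordinate at `z` is `g`. -/
def IsGammaSet {G X : Type*} [Group G] (z : X) (Γ : Set (WreathBase G X)) : Prop :=
  ∀ g : G, ∃ f ∈ Γ, (f : X → G) z = g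

open scoped commutatorElement

section IG17aux
open Function SemidirectProduct
open scoped Classical

variable {G H X : Type*} [Group G] [Group H] [MulAction H X]

lemma IG17.wreathAut_apply (h : H) (f : WreathBase G X) (x : X) :
    ((wreathAut G H X h f : WreathBase G X) : X → G) x = (f : X → G) (h⁻¹ • x) := rfl

lemma IG17.single_apply (z : X) (v : G) (x : X) :
    ((WreathBase.single X z v : WreathBase G X) : X → G) x
      = if x = z then v else 1 := rfl

lemma IG17.base_mul_apply (f g : WreathBase G X) (x : X) :
    ((f * g : WreathBase G X) : X → G) x = (f : X → G) x * (g : X → G) x := rfl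

lemma IG17.base_inv_apply (f : WreathBase G X) (x : X) :
    ((f⁻¹ : WreathBase G X) : X → G) x = ((f : X → G) x)⁻¹ := rfl

lemma IG17.base_one_apply (x : X) :
    ((1 : WreathBase G X) : X → G) x = 1 := rfl

lemma IG17.conj_inl (w : WreathProduct G H X) (f : WreathBase G X) :
    w⁻¹ * inl f * w = inl (wreathAut G H X w.right⁻¹ (w.left⁻¹ * f * w.left)) := by
  apply SemidirectProduct.ext
  · simp [mul_left, inv_left, map_mul]
  · simp [mul_right, inv_right]

lemma IG17.base_conj_single (β : WreathBase G X) (k : H) (z : X) (v : G) :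
    wreathAut G H X k (β⁻¹ * WreathBase.single X z v * β)
      = WreathBase.single X (k • z) (((β : X → G) z)⁻¹ * v * ((β : X → G) z)) := by
  apply Subtype.ext; funext x
  rw [IG17.wreathAut_apply, IG17.base_mul_apply, IG17.base_mul_apply,
    IG17.base_inv_apply, IG17.single_apply, IG17.single_apply]
  rcases eq_or_ne x (k • z) with h | h
  · subst h
    rw [inv_smul_smul, if_pos rfl, if_pos rfl]
  · rw [if_neg h, if_neg (fun hc => h (by rw [← hc, smul_inv_smul]))]
    simp

lemma IG17.conj_inl_single (w : WreathProduct G H X) (z : X) (v : G) :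
    w⁻¹ * inl (WreathBase.single X z v) * w
      = inl (WreathBase.single X (w.right⁻¹ • z)
          ((((w.left : WreathBase G X) : X → G) z)⁻¹ * v * (((w.left : WreathBase G X) : X → G) z))) := by
  rw [IG17.conj_inl, IG17.base_conj_single]

lemma IG17.eq_inl_of_rightHom_eq_one {w : WreathProduct G H X}
    (h : rightHom w = 1) : w = inl w.left := by
  conv_lhs => rw [← inl_left_mul_inr_right w]
  have h2 : w.right = 1 := h
  rw [h2]
  simp

end IG17aux
section IG17aux2
open Function SemidirectProduct
open scoped Classical

variable {G H X : Type*} [Group G] [Group H] [MulAction H X]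

lemma IG17.injective_zpow_smul {t : H} {y : X}
    (h : (Set.range fun n : ℤ => t ^ n • y).Infinite) :
    Function.Injective fun n : ℤ => t ^ n • y := by
  intro a b hab
  by_contra hne
  apply h
  simp only at hab
  set w : X := t ^ a • y with hw
  have hper : ∀ p : ℤ, t ^ p • w = w → ∀ m : ℤ, t ^ (p * m) • w = w := by
    intro p hp m
    have h1 : t ^ p ∈ MulAction.stabilizer H w := hp
    have h2 : (t ^ p) ^ m ∈ MulAction.stabilizer H w :=
      Subgroup.zpow_mem _ h1 m
    simpa [← zpow_mul] using h2
  have hfix : t ^ (b - a) • w = w := by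
    rw [hw, smul_smul, ← zpow_add, sub_add_cancel, ← hab]
  set p : ℤ := b - a with hp
  have hpne : p ≠ 0 := sub_ne_zero_of_ne (Ne.symm hne)
  have key : ∀ n : ℤ, t ^ n • y = t ^ ((n - a) % p) • w := by
    intro n
    have h1 : t ^ n • y = t ^ (n - a) • w := by
      rw [hw, smul_smul, ← zpow_add, sub_add_cancel]
    rw [h1]
    have hdiv : n - a = p * ((n - a) / p) + (n - a) % p := (Int.mul_ediv_add_emod _ _).symm
    conv_lhs => rw [hdiv, add_comm, zpow_add, mul_smul]
    rw [hper p hfix ((n - a) / p)]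
  have hsub : (Set.range fun n : ℤ => t ^ n • y) ⊆
      (fun r : ℤ => t ^ r • w) '' (Set.Ico 0 |p|) := by
    rintro x ⟨n, rfl⟩
    exact ⟨(n - a) % p, ⟨Int.emod_nonneg _ hpne, Int.emod_lt_abs _ hpne⟩, (key n).symm⟩
  exact ((Set.finite_Ico _ _).image _).subset hsub

end IG17aux2
section IG17aux3
open Function SemidirectProduct
open scoped Classical

variable {G H X : Type*} [Group G] [Group H] [MulAction H X]

lemma IG17.pow_right (g : G) (y : X) (t : H) (n : ℕ) :
    ((inl (WreathBase.single X y g) * inr t : WreathProduct G H X) ^ n).right = t ^ n := by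
  induction n with
  | zero => simp
  | succ n ih =>
      rw [pow_succ, mul_right, ih, pow_succ]
      simp [mul_right]

lemma IG17.pow_left_apply (g : G) (y : X) (t : H)
    (inj : Function.Injective fun n : ℤ => t ^ n • y) (n : ℕ) (x : X) :
    ((((inl (WreathBase.single X y g) * inr t : WreathProduct G H X) ^ n).left :
        WreathBase G X) : X → G) x
      = if ∃ j : ℤ, 0 ≤ j ∧ j < (n : ℤ) ∧ t ^ j • y = x then g else 1 := by
  induction n with
  | zero =>
      rw [pow_zero]
      rw [if_neg (by rintro ⟨j, h0, hj, -⟩; omega)]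
      rfl
  | succ n ih =>
      rw [pow_succ, mul_left]
      have hv : (inl (WreathBase.single X y g) * inr t : WreathProduct G H X).left
          = WreathBase.single X y g := by simp [mul_left]
      rw [hv, IG17.pow_right, IG17.base_mul_apply, ih, IG17.wreathAut_apply,
        IG17.single_apply]
      have hiff : ((t ^ n)⁻¹ • x = y) ↔ (x = t ^ (n : ℤ) • y) := by
        rw [inv_smul_eq_iff, zpow_natCast]
      rcases eq_or_ne x (t ^ (n : ℤ) • y) with hx | hx
      · rw [if_pos (hiff.mpr hx), if_neg, one_mul,
          if_pos ⟨(n : ℤ), by omega, by omega, hx.symm⟩]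
        rintro ⟨j, h0, hj, hje⟩
        have : j = (n : ℤ) := inj (show t ^ j • y = t ^ (n:ℤ) • y by rw [hje, hx])
        omega
      · rw [if_neg (fun hc => hx (hiff.mp hc)), mul_one]
        congr 1
        apply propext
        constructor
        · rintro ⟨j, h0, hj, hje⟩; exact ⟨j, h0, by omega, hje⟩
        · rintro ⟨j, h0, hj, hje⟩
          refine ⟨j, h0, ?_, hje⟩
          rcases eq_or_lt_of_le (by omega : j ≤ (n : ℤ)) with hjn | hjn
          · exact absurd (show x = t ^ (n:ℤ) • y by rw [← hjn, hje]) hx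
          · omega

end IG17aux3
section IG17aux4
open Subgroup

lemma IG17.commutator_le_of_conj_gen {G : Type*} [Group G] (𝒢 : Set G)
    (hg : Subgroup.closure 𝒢 = ⊤) (S : Subgroup G)
    (h : ∀ g ∈ 𝒢, ∃ aa : G, (∃ c, aa = c⁻¹ * g * c) ∧
      ∀ δ : G, aa * δ * aa⁻¹ * δ⁻¹ ∈ S) :
    commutator G ≤ S := by
  classical
  set A : Set G := {aa | ∀ δ : G, aa * δ * aa⁻¹ * δ⁻¹ ∈ S} with hA
  set E : Set G := {x | ∃ aa ∈ A, ∃ δ : G, x = aa * δ * aa⁻¹ * δ⁻¹} with hE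
  set M : Subgroup G := Subgroup.closure E with hM
  have hMS : M ≤ S := by
    rw [hM]
    apply Subgroup.closure_le _ |>.mpr
    rintro x ⟨aa, haa, δ, rfl⟩
    exact haa δ
  have hconj : ∀ m ∈ M, ∀ d : G, d * m * d⁻¹ ∈ M := by
    intro m hm
    induction hm using Subgroup.closure_induction with
    | mem x hx =>
        intro d
        obtain ⟨aa, haa, δ, rfl⟩ := hx
        have hid : d * (aa * δ * aa⁻¹ * δ⁻¹) * d⁻¹
            = (aa * d * aa⁻¹ * d⁻¹)⁻¹ * (aa * (d * δ) * aa⁻¹ * (d * δ)⁻¹) := by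
          group
        rw [hid]
        exact mul_mem (inv_mem (Subgroup.subset_closure ⟨aa, haa, d, rfl⟩))
          (Subgroup.subset_closure ⟨aa, haa, d * δ, rfl⟩)
    | one => intro d; simpa using one_mem M
    | mul x y hx hy ihx ihy =>
        intro d
        have hid : d * (x * y) * d⁻¹ = (d * x * d⁻¹) * (d * y * d⁻¹) := by group
        rw [hid]; exact mul_mem (ihx d) (ihy d)
    | inv x hx ihx =>
        intro d
        have hid : d * x⁻¹ * d⁻¹ = (d * x * d⁻¹)⁻¹ := by group
        rw [hid]; exact inv_mem (ihx d)
  haveI hMn : M.Normal := ⟨fun m hm d => hconj m hm d⟩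
  have hcentral : ∀ g ∈ 𝒢, (g : G ⧸ M) ∈ Subgroup.center (G ⧸ M) := by
    intro g hgg
    obtain ⟨aa, ⟨c, hc⟩, hS'⟩ := h g hgg
    have haaA : aa ∈ A := fun δ => hS' δ
    have haac : (aa : G ⧸ M) ∈ Subgroup.center (G ⧸ M) := by
      rw [Subgroup.mem_center_iff]
      intro q
      obtain ⟨δ, rfl⟩ := QuotientGroup.mk_surjective q
      have h1 : ((⁅aa, δ⁆ : G) : G ⧸ M) = 1 := by
        apply (QuotientGroup.eq_one_iff _).mpr
        apply Subgroup.subset_closure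
        exact ⟨aa, haaA, δ, by rw [commutatorElement_def]⟩
      have h2 : ⁅(aa : G ⧸ M), (δ : G ⧸ M)⁆ = 1 := by
        rw [← h1, commutatorElement_def, commutatorElement_def]
        push_cast
        rfl
      exact (commutatorElement_eq_one_iff_mul_comm.mp h2).symm
    have hgq : (g : G ⧸ M) = (c : G ⧸ M) * (aa : G ⧸ M) * (c : G ⧸ M)⁻¹ := by
      have hgc : g = c * aa * c⁻¹ := by rw [hc]; group
      rw [hgc]
      push_cast
      rfl
    have haaeq : (c : G ⧸ M) * (aa : G ⧸ M) * (c : G ⧸ M)⁻¹ = (aa : G ⧸ M) := by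
      rw [Subgroup.mem_center_iff.mp haac (c : G ⧸ M)]
      group
    rw [hgq, haaeq]
    exact haac
  have hcentertop : Subgroup.center (G ⧸ M) = ⊤ := by
    rw [eq_top_iff]
    have himg : Subgroup.closure ((QuotientGroup.mk' M) '' 𝒢) = ⊤ := by
      rw [← MonoidHom.map_closure, hg]
      exact Subgroup.map_top_of_surjective _ (QuotientGroup.mk'_surjective M)
    rw [← himg]
    apply Subgroup.closure_le _ |>.mpr
    rintro x ⟨g, hgg, rfl⟩
    exact hcentral g hgg
  have hcomm : commutator G ≤ M := by
    rw [_root_.commutator_def]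
    apply Subgroup.commutator_le.mpr
    intro g1 _ g2 _
    apply (QuotientGroup.eq_one_iff _).mp
    have hmk : ((⁅g1, g2⁆ : G) : G ⧸ M) = ⁅(g1 : G ⧸ M), (g2 : G ⧸ M)⁆ := by
      rw [commutatorElement_def, commutatorElement_def]
      push_cast
      rfl
    rw [hmk]
    apply commutatorElement_eq_one_iff_mul_comm.mpr
    have h1 : (g1 : G ⧸ M) ∈ Subgroup.center (G ⧸ M) := by rw [hcentertop]; trivial
    exact (Subgroup.mem_center_iff.mp h1 (g2 : G ⧸ M)).symm
  exact hcomm.trans hMS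

end IG17aux4
section IG17aux5
open Function SemidirectProduct
open scoped Classical

variable {G H X : Type*} [Group G] [Group H] [MulAction H X]

lemma IG17.coordHom_eq (z : X) (v : G) :
    coordHom G H z v = inl (WreathBase.single X z v) := rfl

lemma IG17.single_commutator (z : X) (v : G) (f : WreathBase G X) :
    WreathBase.single X z v * f * (WreathBase.single X z v)⁻¹ * f⁻¹
      = WreathBase.single X z (v * (f : X → G) z * v⁻¹ * ((f : X → G) z)⁻¹) := by
  apply Subtype.ext; funext x
  simp only [IG17.base_mul_apply, IG17.base_inv_apply, IG17.single_apply]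
  rcases eq_or_ne x z with h | h
  · subst h; simp
  · simp [h]

lemma IG17.exists_abs_bound {s : Set ℤ} (hs : s.Finite) :
    ∃ b : ℤ, 0 ≤ b ∧ ∀ j ∈ s, |j| ≤ b := by
  obtain ⟨b, hb⟩ := (hs.image (fun j => |j|)).bddAbove
  refine ⟨max b 0, le_max_right _ _, fun j hj => ?_⟩
  exact le_trans (hb (Set.mem_image_of_mem _ hj)) (le_max_left _ _)

lemma IG17.mulsupport_finite (f : WreathBase G X) :
    (Function.mulSupport (f : X → G)).Finite := f.2

end IG17aux5
section IG17aux6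
open Function SemidirectProduct
variable {G H X : Type*} [Group G] [Group H] [MulAction H X]

lemma IG17.wreathAut_inv_apply (k : H) (f : WreathBase G X) :
    wreathAut G H X k⁻¹ (wreathAut G H X k f) = f := by
  apply Subtype.ext; funext x
  rw [IG17.wreathAut_apply, IG17.wreathAut_apply, inv_inv, inv_smul_smul]

end IG17aux6
theorem stmt_17 (G H X : Type*) [Group G] [Group H] [Nontrivial G] [Nontrivial H]
    [MulAction H X] [FaithfulSMul H X] (hH : IsIG H)
    {I : Type*} (y : I → X)
    (hcover : ∀ x : X, ∃ i : I, x ∈ MulAction.orbit H (y i))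
    (t : I → H) (ht : ∀ i : I, (Set.range fun n : ℤ => t i ^ n • y i).Infinite)
    (𝒢 : I → Set G) (h𝒢 : ∀ i : I, Subgroup.closure (𝒢 i) = ⊤)
    (S_H : Set H) (hS : InvariablyGenerates H S_H) :
    InvariablyGenerates (WreathProduct G H X)
      (((fun s => (inr s : WreathProduct G H X)) '' S_H) ∪
        ⋃ i : I,
          ((fun g => coordHom G H (y i) g) '' 𝒢 i) ∪
            ((fun g => coordHom G H (y i) g * inr (t i)) '' 𝒢 i) ∪
            {inr (t i)}) := by
  classical
  intro a
  set BIG : Set (WreathProduct G H X) :=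
    (((fun s => (inr s : WreathProduct G H X)) '' S_H) ∪
      ⋃ i : I,
        ((fun g => coordHom G H (y i) g) '' 𝒢 i) ∪
          ((fun g => coordHom G H (y i) g * inr (t i)) '' 𝒢 i) ∪
          {inr (t i)}) with hBIG
  set K : Subgroup (WreathProduct G H X) :=
    Subgroup.closure ((fun s => (a s)⁻¹ * s * a s) '' BIG) with hK
  have hmemK : ∀ w ∈ BIG, (a w)⁻¹ * w * a w ∈ K := fun w hw =>
    Subgroup.subset_closure (Set.mem_image_of_mem _ hw)
  have hin_s : ∀ s ∈ S_H, (inr s : WreathProduct G H X) ∈ BIG := fun s hs =>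
    Set.mem_union_left _ ⟨s, hs, rfl⟩
  have hin_A : ∀ (i : I), ∀ g ∈ 𝒢 i, (coordHom G H (y i) g : WreathProduct G H X) ∈ BIG :=
    fun i g hg => Set.mem_union_right _
      (Set.mem_iUnion.mpr ⟨i, Set.mem_union_left _ (Set.mem_union_left _ ⟨g, hg, rfl⟩)⟩)
  have hin_D : ∀ (i : I), ∀ g ∈ 𝒢 i,
      (coordHom G H (y i) g * inr (t i) : WreathProduct G H X) ∈ BIG :=
    fun i g hg => Set.mem_union_right _
      (Set.mem_iUnion.mpr ⟨i, Set.mem_union_left _ (Set.mem_union_right _ ⟨g, hg, rfl⟩)⟩)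
  have hin_U : ∀ i : I, (inr (t i) : WreathProduct G H X) ∈ BIG := fun i =>
    Set.mem_union_right _ (Set.mem_iUnion.mpr ⟨i, Set.mem_union_right _ rfl⟩)
  -- Step 1 : K surjects onto H
  have hsurj : ∀ h : H, ∃ w, w ∈ K ∧ rightHom w = h := by
    have hmap : Subgroup.map (rightHom : WreathProduct G H X →* H) K = ⊤ := by
      rw [eq_top_iff, ← hS (fun s => rightHom (a (inr s)))]
      apply Subgroup.closure_le _ |>.mpr
      rintro x ⟨s, hs, rfl⟩
      refine ⟨(a (inr s))⁻¹ * inr s * a (inr s), hmemK _ (hin_s s hs), ?_⟩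
      simp [map_mul, map_inv]
    intro h
    have : h ∈ Subgroup.map (rightHom : WreathProduct G H X →* H) K := by
      rw [hmap]; trivial
    obtain ⟨w, hw, hwr⟩ := this
    exact ⟨w, hw, hwr⟩
  set κ : H → WreathProduct G H X := fun h => Classical.choose (hsurj h) with hκdef
  have hκK : ∀ h : H, κ h ∈ K := fun h => (Classical.choose_spec (hsurj h)).1
  have hκr : ∀ h : H, rightHom (κ h) = h := fun h => (Classical.choose_spec (hsurj h)).2
  -- the key per-orbit construction
  have main : ∀ (i : I), ∀ x ∈ MulAction.orbit H (y i), ∀ γ : G,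
      inl (WreathBase.single X x γ) ∈ K := by
    intro i
    set yy := y i with hyy
    set tt := t i with htt
    have inj : Function.Injective fun n : ℤ => tt ^ n • yy := IG17.injective_zpow_smul (ht i)
    -- the conjugating base element Eh coming from the conjugate of `inr tt`
    set k3 : H := rightHom (a (inr tt)) with hk3
    set m : WreathProduct G H X := a (inr tt) * (κ k3)⁻¹ with hm
    have hmr : rightHom m = 1 := by rw [hm, map_mul, map_inv, hκr, ← hk3]; simp
    set Eh : WreathBase G X := m.left with hEh
    have hminl : m = inl Eh := IG17.eq_inl_of_rightHom_eq_one hmr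
    have hU0 : (inl Eh)⁻¹ * inr tt * inl Eh ∈ K := by
      have h1 : m⁻¹ * inr tt * m
          = κ k3 * ((a (inr tt))⁻¹ * inr tt * a (inr tt)) * (κ k3)⁻¹ := by
        rw [hm]; group
      rw [← hminl, h1]
      exact mul_mem (mul_mem (hκK k3) (hmemK _ (hin_U i))) (inv_mem (hκK k3))
    have hconjpow : ∀ (w u : WreathProduct G H X) (r : ℤ),
        w⁻¹ * u ^ r * w = (w⁻¹ * u * w) ^ r := by
      intro w u r
      have h2 : ∀ v : WreathProduct G H X, w⁻¹ * v * w = MulAut.conj w⁻¹ v := by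
        intro v; simp
      rw [h2, h2, ← map_zpow]
    have hconjpown : ∀ (w u : WreathProduct G H X) (r : ℕ),
        w⁻¹ * u ^ r * w = (w⁻¹ * u * w) ^ r := by
      intro w u r
      have h2 : ∀ v : WreathProduct G H X, w⁻¹ * v * w = MulAut.conj w⁻¹ v := by
        intro v; simp
      rw [h2, h2, ← map_pow]
    have hUr : ∀ r : ℤ, (inl Eh)⁻¹ * inr (tt ^ r) * inl Eh ∈ K := by
      intro r
      have h1 : (inl Eh : WreathProduct G H X)⁻¹ * inr (tt ^ r) * inl Eh
          = ((inl Eh)⁻¹ * inr tt * inl Eh) ^ r := by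
        rw [← hconjpow, map_zpow]
      rw [h1]
      exact zpow_mem hU0 r
    -- sliding base elements of K along the tt-orbit
    have hconjinr : ∀ (f' : WreathBase G X) (r : ℤ),
        ((inr (tt ^ r) : WreathProduct G H X))⁻¹ * inl f' * inr (tt ^ r)
          = inl (wreathAut G H X ((tt ^ r)⁻¹) f') := by
      intro f' r
      have hc := IG17.conj_inl (inr (tt ^ r) : WreathProduct G H X) f'
      simpa only [SemidirectProduct.left_inr, SemidirectProduct.right_inr, inv_one,
        one_mul, mul_one, map_one] using hc
    have hslideK : ∀ (f : WreathBase G X), inl f ∈ K → ∀ r : ℤ,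
        inl (Eh⁻¹ * wreathAut G H X ((tt ^ r)⁻¹) (Eh * f * Eh⁻¹) * Eh) ∈ K := by
      intro f hf r
      have heq : ((inl Eh : WreathProduct G H X)⁻¹ * inr (tt ^ r) * inl Eh)⁻¹ * inl f * ((inl Eh)⁻¹ * inr (tt ^ r) * inl Eh)
          = inl (Eh⁻¹ * wreathAut G H X ((tt ^ r)⁻¹) (Eh * f * Eh⁻¹) * Eh) := by
        have h3 : (inl (Eh⁻¹ * wreathAut G H X ((tt ^ r)⁻¹) (Eh * f * Eh⁻¹) * Eh) :
              WreathProduct G H X)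
            = (inl Eh)⁻¹ * ((inr (tt ^ r))⁻¹ * (inl Eh * inl f * (inl Eh)⁻¹) * inr (tt ^ r))
              * inl Eh := by
          rw [map_mul, map_mul, map_inv, ← hconjinr]
          simp only [map_mul, map_inv]
        rw [h3]; group
      rw [← heq]
      exact mul_mem (mul_mem (inv_mem (hUr r)) hf) (hUr r)
    have hslideval : ∀ (f : WreathBase G X) (r j : ℤ),
        (Eh : X → G) (tt ^ j • yy) = 1 → (Eh : X → G) (tt ^ (j + r) • yy) = 1 →
        ((Eh⁻¹ * wreathAut G H X ((tt ^ r)⁻¹) (Eh * f * Eh⁻¹) * Eh : WreathBase G X) : X → G)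
            (tt ^ j • yy)
          = (f : X → G) (tt ^ (j + r) • yy) := by
      intro f r j h1 h2
      simp only [IG17.base_mul_apply, IG17.base_inv_apply, IG17.wreathAut_apply, inv_inv]
      have hx : tt ^ r • tt ^ j • yy = tt ^ (j + r) • yy := by
        rw [smul_smul, ← zpow_add, add_comm]
      rw [hx, h1, h2]
      simp
    -- the finitely many bad positions of Eh along the orbit
    obtain ⟨B0, hB00, hB0⟩ : ∃ B : ℤ, 0 ≤ B ∧ ∀ j : ℤ, B < |j| →
        (Eh : X → G) (tt ^ j • yy) = 1 := by
      have hpre : ((fun j : ℤ => tt ^ j • yy) ⁻¹' (Function.mulSupport (Eh : X → G))).Finite :=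
        Set.Finite.preimage inj.injOn (IG17.mulsupport_finite Eh)
      obtain ⟨B, hB0', hB⟩ := IG17.exists_abs_bound hpre
      refine ⟨B, hB0', fun j hj => ?_⟩
      by_contra hne
      exact absurd (hB j hne) (not_le.mpr hj)
    -- exact windows for each generator
    have hGen : ∀ g ∈ 𝒢 i, ∀ (L : ℕ) (lo : ℤ), ∃ f : WreathBase G X, inl f ∈ K ∧
        ∃ aj : ℤ, lo ≤ aj ∧ ∀ j : ℤ, aj ≤ j → j < aj + L →
          (f : X → G) (tt ^ j • yy) = g := by
      intro g hg L lo
      set v : WreathProduct G H X := inl (WreathBase.single X yy g) * inr tt with hv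
      have hvBIG : v ∈ BIG := hin_D i g hg
      set k2 : H := rightHom (a v) with hk2
      set mg : WreathProduct G H X := a v * (κ k2)⁻¹ with hmg
      have hmgr : rightHom mg = 1 := by rw [hmg, map_mul, map_inv, hκr, ← hk2]; simp
      set Fg : WreathBase G X := mg.left with hFgdef
      have hmginl : mg = inl Fg := IG17.eq_inl_of_rightHom_eq_one hmgr
      have hDK : ∀ n : ℕ, mg⁻¹ * v ^ n * mg ∈ K := by
        intro n
        have h1 : mg⁻¹ * v * mg = κ k2 * ((a v)⁻¹ * v * a v) * (κ k2)⁻¹ := by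
          rw [hmg]; group
        have h2 : mg⁻¹ * v * mg ∈ K := by
          rw [h1]
          exact mul_mem (mul_mem (hκK k2) (hmemK _ hvBIG)) (inv_mem (hκK k2))
        rw [hconjpown]
        exact pow_mem h2 n
      -- bad bound for Fg and Eh
      obtain ⟨Bg, hBg0, hBg⟩ : ∃ B : ℤ, 0 ≤ B ∧ ∀ j : ℤ, B < |j| →
          (Fg : X → G) (tt ^ j • yy) = 1 ∧ (Eh : X → G) (tt ^ j • yy) = 1 := by
        have hpre : ((fun j : ℤ => tt ^ j • yy) ⁻¹'
            (Function.mulSupport (Fg : X → G))).Finite :=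
          Set.Finite.preimage inj.injOn (IG17.mulsupport_finite Fg)
        obtain ⟨B1, hB10, hB1⟩ := IG17.exists_abs_bound hpre
        refine ⟨max B1 B0, le_trans hB10 (le_max_left _ _), fun j hj => ⟨?_, ?_⟩⟩
        · by_contra hne
          have : j ∈ (fun j : ℤ => tt ^ j • yy) ⁻¹'
              (Function.mulSupport (Fg : X → G)) := hne
          have := hB1 j this
          have : B1 < |j| := lt_of_le_of_lt (le_max_left B1 B0) hj
          omega
        · exact hB0 j (lt_of_le_of_lt (le_max_right B1 B0) hj)
      set aj : ℤ := max lo (Bg + 1) with haj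
      set n : ℕ := (aj + L + Bg + 1).toNat with hn
      have hajlo : lo ≤ aj := le_max_left _ _
      have hajB : Bg + 1 ≤ aj := le_max_right _ _
      have hnz : (n : ℤ) = aj + L + Bg + 1 := Int.toNat_of_nonneg (by omega)
      -- the element of K with an exact window
      set El : WreathProduct G H X :=
        (mg⁻¹ * v ^ n * mg) * ((inl Eh)⁻¹ * inr (tt ^ (-(n : ℤ))) * inl Eh) with hEl
      have hElK : El ∈ K := mul_mem (hDK n) (hUr _)
      set Wn : WreathBase G X := ((v ^ n).left) with hWn
      have hvpow : v ^ n = inl Wn * inr (tt ^ n) := by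
        conv_lhs => rw [← inl_left_mul_inr_right (v ^ n)]
        rw [hWn, hv, IG17.pow_right]
      set RR : WreathBase G X :=
        Fg⁻¹ * Wn * wreathAut G H X (tt ^ n) (Fg * Eh⁻¹) * Eh with hRR
      have hElinl : El = inl RR := by
        rw [hEl, hmginl, hvpow]
        have hmid : ((inr (tt ^ n) : WreathProduct G H X))⁻¹
              * inl (wreathAut G H X (tt ^ n) (Fg * Eh⁻¹)) * inr (tt ^ n)
            = inl (Fg * Eh⁻¹) := by
          have hc := IG17.conj_inl ((inr (tt ^ n) : WreathProduct G H X))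
            (wreathAut G H X (tt ^ n) (Fg * Eh⁻¹))
          rw [hc]
          simp only [SemidirectProduct.left_inr, SemidirectProduct.right_inr, inv_one,
            one_mul, mul_one, map_one]
          rw [IG17.wreathAut_inv_apply]
        have hmid2 : (inl (wreathAut G H X (tt ^ n) (Fg * Eh⁻¹)) : WreathProduct G H X)
            = inr (tt ^ n) * inl (Fg * Eh⁻¹) * (inr (tt ^ n))⁻¹ := by
          rw [← hmid]; group
        have hsplit : (inr (tt ^ (-(n : ℤ))) : WreathProduct G H X) = (inr (tt ^ n))⁻¹ := by
          rw [zpow_neg, map_inv, zpow_natCast]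
        rw [hsplit, hRR, map_mul, map_mul, map_mul, map_inv, hmid2, map_mul, map_inv]
        group
      -- window values
      refine ⟨RR, by rw [← hElinl]; exact hElK, aj, hajlo, ?_⟩
      intro j hj1 hj2
      have hj0 : 0 ≤ j := by omega
      have hjn : j < (n : ℤ) := by omega
      have hWnval : (Wn : X → G) (tt ^ j • yy) = g := by
        rw [hWn, hv, IG17.pow_left_apply g yy tt inj n]
        rw [if_pos ⟨j, hj0, hjn, rfl⟩]
      have hFgj : (Fg : X → G) (tt ^ j • yy) = 1 :=
        (hBg j (by rw [abs_of_nonneg hj0]; omega)).1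
      have hEhj : (Eh : X → G) (tt ^ j • yy) = 1 :=
        (hBg j (by rw [abs_of_nonneg hj0]; omega)).2
      have hjneg : j - (n : ℤ) < 0 := by omega
      have habs : Bg < |j - (n : ℤ)| := by rw [abs_of_neg hjneg]; omega
      have hFgn : (Fg : X → G) (tt ^ (j - (n : ℤ)) • yy) = 1 := (hBg _ habs).1
      have hEhn : (Eh : X → G) (tt ^ (j - (n : ℤ)) • yy) = 1 := (hBg _ habs).2
      have hshift : ((tt ^ n)⁻¹ • (tt ^ j • yy)) = tt ^ (j - (n : ℤ)) • yy := by
        rw [smul_smul]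
        have : (tt ^ n : H)⁻¹ * tt ^ j = tt ^ (j - (n : ℤ)) := by
          rw [← zpow_natCast tt n, ← zpow_neg, ← zpow_add]
          congr 1
          ring
        rw [this]
      rw [hRR]
      simp only [IG17.base_mul_apply, IG17.base_inv_apply, IG17.wreathAut_apply]
      rw [hshift, hWnval, hFgj, hEhj, hFgn, hEhn]
      simp
    -- arbitrarily long exact windows for every element of G
    have hGood : ∀ γ : G, ∀ (L : ℕ) (lo : ℤ), ∃ f : WreathBase G X, inl f ∈ K ∧
        ∃ aj : ℤ, lo ≤ aj ∧ ∀ j : ℤ, aj ≤ j → j < aj + L →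
          (f : X → G) (tt ^ j • yy) = γ := by
      intro γ
      have hγ : γ ∈ Subgroup.closure (𝒢 i) := by rw [h𝒢 i]; trivial
      induction hγ using Subgroup.closure_induction with
      | mem g hg => exact hGen g hg
      | one =>
          intro L lo
          exact ⟨1, by rw [map_one]; exact one_mem K, lo, le_refl _, fun j _ _ => rfl⟩
      | inv γ' hγc ih =>
          intro L lo
          obtain ⟨f, hfK, aj, hlo, hwin⟩ := ih L lo
          refine ⟨f⁻¹, by rw [map_inv]; exact inv_mem hfK, aj, hlo, fun j h1 h2 => ?_⟩
          rw [IG17.base_inv_apply, hwin j h1 h2]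
      | mul γ1 γ2 h1c h2c ih1 ih2 =>
          intro L lo
          obtain ⟨f1, hf1K, a1, hlo1, hwin1⟩ := ih1 L (max lo (B0 + 1))
          obtain ⟨f2, hf2K, a2, hlo2, hwin2⟩ := ih2 L (B0 + 1)
          refine ⟨f1 * (Eh⁻¹ * wreathAut G H X ((tt ^ (a2 - a1))⁻¹) (Eh * f2 * Eh⁻¹) * Eh),
            by rw [map_mul]; exact mul_mem hf1K (hslideK f2 hf2K (a2 - a1)),
            a1, le_trans (le_max_left _ _) hlo1, fun j hj1 hj2 => ?_⟩
          have hjB : B0 + 1 ≤ j := le_trans (le_trans (le_max_right _ _) hlo1) hj1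
          have hEj : (Eh : X → G) (tt ^ j • yy) = 1 :=
            hB0 j (by rw [abs_of_nonneg (by omega)]; omega)
          have hEjr : (Eh : X → G) (tt ^ (j + (a2 - a1)) • yy) = 1 :=
            hB0 _ (by rw [abs_of_nonneg (by omega)]; omega)
          rw [IG17.base_mul_apply, hwin1 j hj1 hj2, hslideval f2 (a2 - a1) j hEj hEjr,
            hwin2 (j + (a2 - a1)) (by omega) (by omega)]
    -- a fixed point xstar on the orbit with a Γ-set
    set j0 : ℤ := B0 + 1 with hj0def
    set xstar : X := tt ^ j0 • yy with hxstardef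
    have hΓ : ∀ δ : G, ∃ f : WreathBase G X, inl f ∈ K ∧ (f : X → G) xstar = δ := by
      intro δ
      obtain ⟨f, hfK, aj, hlo, hwin⟩ := hGood δ 1 (B0 + 1)
      refine ⟨Eh⁻¹ * wreathAut G H X ((tt ^ (aj - j0))⁻¹) (Eh * f * Eh⁻¹) * Eh,
        hslideK f hfK (aj - j0), ?_⟩
      rw [hxstardef]
      have hEj : (Eh : X → G) (tt ^ j0 • yy) = 1 :=
        hB0 j0 (by rw [abs_of_nonneg (by omega)]; omega)
      have hEjr : (Eh : X → G) (tt ^ (j0 + (aj - j0)) • yy) = 1 :=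
        hB0 _ (by rw [abs_of_nonneg (by omega)]; omega)
      rw [hslideval f (aj - j0) j0 hEj hEjr]
      have hje : j0 + (aj - j0) = aj := by omega
      rw [hje]
      exact hwin aj (le_refl _) (by omega)
    -- singles with unknown conjugators at every point of the orbit
    have hsingle : ∀ (x : X), x ∈ MulAction.orbit H yy → ∀ g ∈ 𝒢 i,
        ∃ c : G, inl (WreathBase.single X x (c⁻¹ * g * c)) ∈ K := by
      intro x hx g hg
      obtain ⟨h0, hh0⟩ := hx
      have hA0 : (a (coordHom G H (y i) g))⁻¹ * coordHom G H (y i) g * a (coordHom G H (y i) g)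
          ∈ K := hmemK _ (hin_A i g hg)
      rw [IG17.coordHom_eq] at hA0
      rw [IG17.conj_inl_single] at hA0
      set w1 : WreathProduct G H X := a (inl (WreathBase.single X (y i) g)) with hw1
      set z1 : X := w1.right⁻¹ • y i with hz1
      set c1 : G := ((w1.left : WreathBase G X) : X → G) (y i) with hc1
      set h' : H := w1.right⁻¹ * h0⁻¹ with hh'
      have hmem2 : (κ h')⁻¹ * inl (WreathBase.single X z1 (c1⁻¹ * g * c1)) * κ h' ∈ K :=
        mul_mem (mul_mem (inv_mem (hκK h')) hA0) (hκK h')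
      rw [IG17.conj_inl_single] at hmem2
      set c2 : G := (((κ h').left : WreathBase G X) : X → G) z1 with hc2
      have hpos : (κ h').right⁻¹ • z1 = x := by
        have hr' : (κ h').right = h' := hκr h'
        rw [hr', hz1, hh', smul_smul]
        have : (w1.right⁻¹ * h0⁻¹)⁻¹ * w1.right⁻¹ = h0 := by group
        rw [this]
        rw [← hyy]
        exact hh0
      rw [hpos] at hmem2
      refine ⟨c1 * c2, ?_⟩
      have hval : c2⁻¹ * (c1⁻¹ * g * c1) * c2 = (c1 * c2)⁻¹ * g * (c1 * c2) := by group
      rwa [hval] at hmem2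
    have hyyorbit : ∀ (j : ℤ), tt ^ j • yy ∈ MulAction.orbit H yy := fun j => ⟨tt ^ j, rfl⟩
    -- commutator subgroup at xstar
    have hcommstar : ∀ u : G, u ∈ commutator G →
        inl (WreathBase.single X xstar u) ∈ K := by
      have hle : commutator G ≤ Subgroup.comap (coordHom G H xstar) K := by
        apply IG17.commutator_le_of_conj_gen (𝒢 i) (h𝒢 i)
        intro g hg
        obtain ⟨c, hc⟩ := hsingle xstar (by rw [hxstardef]; exact hyyorbit j0) g hg
        refine ⟨c⁻¹ * g * c, ⟨c, rfl⟩, fun δ => ?_⟩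
        obtain ⟨f, hfK, hfval⟩ := hΓ δ
        have hcm : inl (WreathBase.single X xstar (c⁻¹ * g * c)) * inl f *
            (inl (WreathBase.single X xstar (c⁻¹ * g * c)))⁻¹ * (inl f)⁻¹ ∈ K :=
          mul_mem (mul_mem (mul_mem hc hfK) (inv_mem hc)) (inv_mem hfK)
        rw [Subgroup.mem_comap, IG17.coordHom_eq, ← hfval, ← IG17.single_commutator]
        rw [map_mul, map_mul, map_mul, map_inv, map_inv]
        exact hcm
      intro u hu
      have hm' := hle hu
      rwa [Subgroup.mem_comap, IG17.coordHom_eq] at hm'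
    -- conclusion : all singles over the orbit
    intro x hx γ
    obtain ⟨h0, hh0⟩ := hx
    have hcommx : ∀ u : G, u ∈ commutator G → inl (WreathBase.single X x u) ∈ K := by
      intro u hu
      set h' : H := tt ^ j0 * h0⁻¹ with hh'
      set c2 : G := (((κ h').left : WreathBase G X) : X → G) xstar with hc2
      have hu' : c2 * u * c2⁻¹ ∈ commutator G :=
        (Subgroup.commutator_normal ⊤ ⊤).conj_mem u hu c2
      have hmem := mul_mem (mul_mem (inv_mem (hκK h')) (hcommstar _ hu')) (hκK h')
      rw [IG17.conj_inl_single] at hmem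
      have hpos : (κ h').right⁻¹ • xstar = x := by
        have hr' : (κ h').right = h' := hκr h'
        rw [hr', hh', hxstardef, smul_smul]
        have : (tt ^ j0 * h0⁻¹)⁻¹ * tt ^ j0 = h0 := by group
        rw [this, hyy]
        exact hh0
      rw [hpos] at hmem
      have hval : c2⁻¹ * (c2 * u * c2⁻¹) * c2 = u := by group
      rwa [hval] at hmem
    have hgenx : ∀ g ∈ 𝒢 i, inl (WreathBase.single X x g) ∈ K := by
      intro g hg
      obtain ⟨c, hc⟩ := hsingle x ⟨h0, hh0⟩ g hg
      have hd : (c⁻¹ * g * c)⁻¹ * g ∈ commutator G := by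
        have hiseq : (c⁻¹ * g * c)⁻¹ * g = ⁅c⁻¹, g⁻¹⁆ := by
          rw [commutatorElement_def]; group
        rw [hiseq]
        exact Subgroup.commutator_mem_commutator (Subgroup.mem_top _) (Subgroup.mem_top _)
      have h2 := hcommx _ hd
      have h3 := mul_mem hc h2
      rw [← map_mul, ← map_mul] at h3
      have hval : (c⁻¹ * g * c) * ((c⁻¹ * g * c)⁻¹ * g) = g := by group
      rwa [hval] at h3
    have hSx : Subgroup.closure (𝒢 i) ≤ Subgroup.comap (coordHom G H x) K := by
      apply Subgroup.closure_le _ |>.mpr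
      intro g hg
      rw [SetLike.mem_coe, Subgroup.mem_comap, IG17.coordHom_eq]
      exact hgenx g hg
    have hγtop : γ ∈ Subgroup.closure (𝒢 i) := by rw [h𝒢 i]; trivial
    have hfin := hSx hγtop
    rwa [Subgroup.mem_comap, IG17.coordHom_eq] at hfin
  -- every single lies in K
  have hallsingle : ∀ (x : X) (γ : G), inl (WreathBase.single X x γ) ∈ K := by
    intro x γ
    obtain ⟨i, hx⟩ := hcover x
    exact main i x hx γ
  -- every base element lies in K
  have hbase : ∀ f : WreathBase G X, inl f ∈ K := by
    have key : ∀ (s : Finset X) (f : WreathBase G X),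
        Function.mulSupport (f : X → G) ⊆ s → inl f ∈ K := by
      intro s
      induction s using Finset.induction_on with
      | empty =>
          intro f hf
          have : f = 1 := by
            apply Subtype.ext; funext z
            by_contra hz
            exact absurd (hf hz) (by simp)
          rw [this, map_one]; exact one_mem K
      | @insert x0 s hx0 ih =>
          intro f hf
          set f' : WreathBase G X := (WreathBase.single X x0 ((f : X → G) x0))⁻¹ * f with hf'
          have hsupp : Function.mulSupport ((f' : X → G)) ⊆ s := by
            intro z hz
            rw [hf'] at hz
            have hz' : ((WreathBase.single X x0 ((f : X → G) x0))⁻¹ * f : WreathBase G X).val z ≠ 1 := hz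
            rw [IG17.base_mul_apply, IG17.base_inv_apply, IG17.single_apply] at hz'
            rcases eq_or_ne z x0 with h | h
            · exfalso; apply hz'; rw [if_pos h, h]; simp
            · rw [if_neg h] at hz'
              simp only [inv_one, one_mul] at hz'
              have := hf hz'
              simp only [Finset.coe_insert, Set.mem_insert_iff] at this
              rcases this with h' | h'
              · exact absurd h' h
              · exact h'
          have h1 : inl f' ∈ K := ih f' hsupp
          have h2 : f = WreathBase.single X x0 ((f : X → G) x0) * f' := by
            rw [hf']; group
          rw [h2, map_mul]
          exact mul_mem (hallsingle x0 _) h1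
    intro f
    apply key (IG17.mulsupport_finite f).toFinset
    intro z hz
    simpa using hz
  -- conclude
  rw [Subgroup.eq_top_iff']
  intro w
  have h1 : inl w.left ∈ K := hbase w.left
  have h2 : (inr w.right : WreathProduct G H X) ∈ K := by
    have h3 : κ w.right ∈ K := hκK w.right
    have h4 : inl (κ w.right).left ∈ K := hbase _
    have h5 : κ w.right = inl (κ w.right).left * inr ((κ w.right).right) :=
      (inl_left_mul_inr_right _).symm
    have h6 : (κ w.right).right = w.right := hκr w.right
    rw [h5, h6] at h3
    exact (Subgroup.mul_mem_cancel_left K h4).mp h3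
  have hw : w = inl w.left * inr w.right := (inl_left_mul_inr_right _).symm
  rw [hw]
  exact mul_mem h1 h2
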